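/- The momentum-energy map R admits the Lax representation with Lax matrix L(x, ζ) = [[ζ, x₀ + x₁], [x₀ − x₁, ζ]]: for all x, y ∈ ℝ² with ⟨x+y, x+y⟩ ≠ 0, setting k = (⟨x,x⟩ − ⟨y,y⟩)/⟨x+y, x+y⟩, u = y + k(x+y), v = x − k(x+y), one has for every ζ ∈ ℂ the 2×2 matrix identity L(u, ζ) · L(v, ζ) = L(y, ζ) · L(x, ζ). -/
import Mathlib


open Matrix

/-- The two-dimensional Minkowski bilinear form on `ℝ²`. -/
def mink (a b : ℝ × ℝ) : ℝ := a.1 * b.1 - a.2 * b.2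

/-- The Lax matrix `L(x, ζ) = [[ζ, x₀ + x₁], [x₀ − x₁, ζ]]` of the
momentum-energy map. -/
noncomputable def LaxME (x : ℝ × ℝ) (ζ : ℂ) : Matrix (Fin 2) (Fin 2) ℂ :=
  !![ζ, ((x.1 + x.2 : ℝ) : ℂ); ((x.1 - x.2 : ℝ) : ℂ), ζ]

/-- The momentum-energy map admits the Lax representation with Lax matrix
`L(x, ζ)`. -/
theorem momentum_energy_lax
    (x y : ℝ × ℝ) (h : mink (x + y) (x + y) ≠ 0)
    (k : ℝ) (hk : k = (mink x x - mink y y) / mink (x + y) (x + y))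
    (u v : ℝ × ℝ)
    (hu : u = y + k • (x + y))
    (hv : v = x - k • (x + y))
    (ζ : ℂ) :
    LaxME u ζ * LaxME v ζ = LaxME y ζ * LaxME x ζ := by
  have hk' : k * mink (x + y) (x + y) = mink x x - mink y y := by
    rw [hk]; field_simp
  simp only [mink, Prod.fst_add, Prod.snd_add] at hk'
  have hc : (k : ℂ) * ((x.1 + y.1) * (x.1 + y.1) - (x.2 + y.2) * (x.2 + y.2)) =
      x.1 * x.1 - x.2 * x.2 - (y.1 * y.1 - y.2 * y.2) := by exact_mod_cast hk'
  subst hu hv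
  ext i j
  fin_cases i <;> fin_cases j <;>
    simp [LaxME, mul_apply, Fin.sum_univ_two, Prod.fst_add, Prod.snd_add,
      Prod.fst_sub, Prod.snd_sub, Prod.smul_fst, Prod.smul_snd, smul_eq_mul]
  all_goals try ring
  all_goals linear_combination (-(k : ℂ)) * hc
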